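/- Let p : E → B be a fibration, A an abelian group, and for each k let p_k : E_k → B be the k-fold fiberwise join of p with itself. Define the sectional category weight wgt_p(u) of a nonzero class u ∈ H̃^*(B;A) as the supremum of k with p_k^*(u) = 0. If wgt_p(u) = k then secat(p) ≥ k, where secat(p) is the minimal r such that B has an open cover by r+1 sets each admitting a continuous local section of p. -/

import Mathlib

open scoped ENat

/-- The sectional category of a map `p : E → B`: the minimal `r` such that `B` admits an
open cover by `r + 1` sets over each of which `p` has a continuous local section
(`⊤` if no such `r` exists). -/
noncomputable def secat {E B : Type*} [TopologicalSpace E] [TopologicalSpace B]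
    (p : E → B) : ℕ∞ :=
  sInf {n : ℕ∞ | ∃ r : ℕ, n = (r : ℕ∞) ∧
    ∃ U : Fin (r + 1) → Set B, (∀ i, IsOpen (U i)) ∧ (∀ b, ∃ i, b ∈ U i) ∧
      ∀ i, ∃ s : U i → E, Continuous s ∧ ∀ x : U i, p (s x) = (x : B)}

/-- The sectional category weight of a class `u ∈ H̃^*(B;A)` with respect to `p`:
`wgt_p(u) = sup { k | p_k^*(u) = 0 }`, where `pull k : H̃^*(B;A) → H̃^*(E_k;A)` is the
map induced by the `k`-fold fiberwise join `p_k : E_k → B` of `p` with itself. -/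
noncomputable def wgt {HB : Type*} [AddCommGroup HB] {HE : ℕ → Type*}
    [∀ k, AddCommGroup (HE k)] (pull : ∀ k, HB →+ HE k) (u : HB) : ℕ∞ :=
  sSup {n : ℕ∞ | ∃ k : ℕ, n = (k : ℕ∞) ∧ pull k u = 0}

/- STATEMENT 4.
`p : E → B` is a fibration with `k`-fold fiberwise joins `p_k : E_k → B`; the abelian
groups `HB` and `HE k` are the reduced cohomology `H̃^*(B;A)` and `H̃^*(E_k;A)` with
coefficients in the abelian group `A`, and `pull k = p_k^*` is the induced map.  The
hypotheses record the standard facts: (Schwarz's theorem) if `secat p ≤ r` then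
`p_{r+1}` admits a global continuous section, and a global section of `p_k` makes
`p_k^*` injective.  Conclusion: if `wgt_p(u) = k` for a nonzero `u`, then `secat p ≥ k`. -/
theorem secat_ge_of_wgt_eq {E B : Type*} [TopologicalSpace E] [TopologicalSpace B]
    (p : E → B) (hp : Continuous p)
    (Ek : ℕ → Type*) [∀ k, TopologicalSpace (Ek k)]
    (pk : ∀ k, Ek k → B) (hpk : ∀ k, Continuous (pk k))
    (HB : Type*) [AddCommGroup HB] (HE : ℕ → Type*) [∀ k, AddCommGroup (HE k)]
    (pull : ∀ k, HB →+ HE k)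
    (hSchwarz : ∀ r : ℕ, secat p ≤ (r : ℕ∞) →
      ∃ s : B → Ek (r + 1), Continuous s ∧ ∀ b, pk (r + 1) (s b) = b)
    (hsection : ∀ (k : ℕ) (s : B → Ek k), Continuous s → (∀ b, pk k (s b) = b) →
      Function.Injective (pull k))
    (u : HB) (hu : u ≠ 0) (k : ℕ) (hwgt : wgt pull u = (k : ℕ∞)) :
    (k : ℕ∞) ≤ secat p := by
  -- handle k = 0 trivially
  rcases Nat.eq_zero_or_pos k with rfl | hkpos
  · simp
  -- the set defining wgt is finite and nonempty, so its sup is attained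
  have hmem : pull k u = 0 := by
    set S : Set ℕ∞ := {n : ℕ∞ | ∃ j : ℕ, n = (j : ℕ∞) ∧ pull j u = 0} with hS
    have hsup : sSup S = (k : ℕ∞) := hwgt
    have hbdd : S ⊆ Set.Iic (k : ℕ∞) := fun n hn => by
      rw [← hsup]; exact le_sSup hn
    have hfin : S.Finite := by
      refine Set.Finite.subset ?_ hbdd
      have : Set.Iic (k : ℕ∞) ⊆ (insert ⊤ (Nat.cast '' Set.Iic k) : Set ℕ∞) := by
        intro n hn
        cases n with
        | top => exact Set.mem_insert _ _
        | coe m =>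
          right
          exact ⟨m, by simpa using hn, rfl⟩
      exact Set.Finite.subset (Set.Finite.insert _ ((Set.finite_Iic k).image _)) this
    have hne : S.Nonempty := by
      by_contra h
      rw [Set.not_nonempty_iff_eq_empty] at h
      rw [h, sSup_empty] at hsup
      exact absurd hsup.symm (by simpa using hkpos.ne')
    have := hne.csSup_mem hfin
    rw [hsup] at this
    obtain ⟨j, hj, hval⟩ := this
    obtain rfl : k = j := by exact_mod_cast hj
    exact hval
  by_contra h
  push_neg at h
  obtain ⟨m, rfl⟩ := Nat.exists_eq_succ_of_ne_zero hkpos.ne'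
  have hle : secat p ≤ (m : ℕ∞) := Order.le_of_lt_add_one (by exact_mod_cast h)
  obtain ⟨s, hs, hsec⟩ := hSchwarz m hle
  exact hu ((hsection (m + 1) s hs hsec) (by simpa using hmem))
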